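/- Fix nonzero integers a₁, a₂, a₃, a₄ and let X be a Sidon subset of [n]. Then the number of quadruples (x₁,x₂,x₃,x₄) ∈ X⁴ with a₁x₁ + a₂x₂ + a₃x₃ + a₄x₄ = 0 is O(n), i.e., at most C·n for a constant C depending only on a₁,…,a₄. -/

import Mathlib

open Finset

def IsSidon (X : Finset ℤ) : Prop :=
  ∀ a ∈ X, ∀ b ∈ X, ∀ c ∈ X, ∀ d ∈ X, a + b = c + d → (a = c ∧ b = d) ∨ (a = d ∧ b = c)

private lemma sidon_card_sq (n : ℕ) (X : Finset ℤ) (hXn : X ⊆ Finset.Icc 1 (n : ℤ))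
    (hX : IsSidon X) : X.card ^ 2 ≤ 3 * n := by
  classical
  have hcard : X.card ≤ n := by
    have := Finset.card_le_card hXn
    simpa using this
  -- split X ×ˢ X into diagonal and off-diagonal
  set O := (X ×ˢ X).filter (fun p : ℤ × ℤ => p.1 ≠ p.2) with hO
  set D := (X ×ˢ X).filter (fun p : ℤ × ℤ => p.1 = p.2) with hD
  have hsplit : D.card + O.card = (X ×ˢ X).card :=
    Finset.card_filter_add_card_filter_not _
  have hDle : D.card ≤ X.card := by
    apply Finset.card_le_card_of_injOn (fun p => p.1)
    · intro p hp
      simp only [hD, mem_coe, mem_filter, mem_product] at hp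
      exact hp.1.1
    · intro p hp q hq h
      simp only [hD, mem_coe, mem_filter, mem_product] at hp hq
      simp only at h
      exact Prod.ext h (by rw [← hp.2, ← hq.2, h])
  have hOle : O.card ≤ ((Finset.Icc (1 - (n:ℤ)) ((n:ℤ) - 1))).card := by
    apply Finset.card_le_card_of_injOn (fun p => p.1 - p.2)
    · intro p hp
      simp only [hO, mem_coe, mem_filter, mem_product] at hp
      have h1 := hXn hp.1.1
      have h2 := hXn hp.1.2
      simp only [mem_coe, mem_Icc] at h1 h2 ⊢
      omega
    · intro p hp q hq h
      simp only [hO, mem_coe, mem_filter, mem_product] at hp hq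
      have key : p.1 + q.2 = q.1 + p.2 := by dsimp at h; omega
      rcases hX p.1 hp.1.1 q.2 hq.1.2 q.1 hq.1.1 p.2 hp.1.2 key with ⟨h1, h2⟩ | ⟨h1, h2⟩
      · exact Prod.ext h1 h2.symm
      · exact absurd h1 hp.2
  have hIcc : ((Finset.Icc (1 - (n:ℤ)) ((n:ℤ) - 1))).card ≤ 2 * n := by
    rw [Int.card_Icc]
    omega
  have : (X ×ˢ X).card = X.card ^ 2 := by rw [Finset.card_product]; ring
  omega

lemma energy_bound (a b : ℤ) (ha : a ≠ 0) (hb : b ≠ 0) (X : Finset ℤ) (hX : IsSidon X) :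
    (((X ×ˢ X) ×ˢ (X ×ˢ X)).filter fun p : (ℤ × ℤ) × ℤ × ℤ =>
        a * p.1.1 + b * p.1.2 = a * p.2.1 + b * p.2.2).card ≤ 2 * X.card ^ 2 := by
  classical
  set S := ((X ×ˢ X) ×ˢ (X ×ˢ X)).filter fun p : (ℤ × ℤ) × ℤ × ℤ =>
        a * p.1.1 + b * p.1.2 = a * p.2.1 + b * p.2.2 with hS
  have hsplit : (S.filter fun p => p.1.1 = p.2.1).card
      + (S.filter fun p => ¬ p.1.1 = p.2.1).card = S.card :=
    Finset.card_filter_add_card_filter_not _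
  have hmem : ∀ p ∈ S, (p.1.1 ∈ X ∧ p.1.2 ∈ X) ∧ (p.2.1 ∈ X ∧ p.2.2 ∈ X)
      ∧ a * p.1.1 + b * p.1.2 = a * p.2.1 + b * p.2.2 := by
    intro p hp
    simp only [hS, mem_filter, mem_product] at hp
    tauto
  have hD : (S.filter fun p => p.1.1 = p.2.1).card ≤ X.card ^ 2 := by
    have : (S.filter fun p => p.1.1 = p.2.1).card ≤ (X ×ˢ X).card := by
      apply Finset.card_le_card_of_injOn (fun p => p.1)
      · intro p hp
        simp only [mem_coe, mem_filter] at hp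
        have := hmem p hp.1
        simp only [mem_coe, mem_product]
        exact this.1
      · intro p hp q hq h
        simp only [mem_coe, mem_filter] at hp hq
        obtain ⟨⟨hp1, hp2⟩, ⟨hp3, hp4⟩, hpe⟩ := hmem p hp.1
        obtain ⟨⟨hq1, hq2⟩, ⟨hq3, hq4⟩, hqe⟩ := hmem q hq.1
        have e1 : p.2.2 = p.1.2 := by
          have : b * p.1.2 = b * p.2.2 := by rw [hp.2] at hpe; linarith
          exact (mul_left_cancel₀ hb this).symm
        have e2 : q.2.2 = q.1.2 := by
          have : b * q.1.2 = b * q.2.2 := by rw [hq.2] at hqe; linarith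
          exact (mul_left_cancel₀ hb this).symm
        have h1 : p.1 = q.1 := h
        refine Prod.ext h1 (Prod.ext ?_ ?_)
        · rw [← hp.2, ← hq.2, h1]
        · rw [e1, e2, h1]
    simpa [Finset.card_product, sq] using this
  have hO : (S.filter fun p => ¬ p.1.1 = p.2.1).card ≤ X.card ^ 2 := by
    have : (S.filter fun p => ¬ p.1.1 = p.2.1).card ≤ (X ×ˢ X).card := by
      apply Finset.card_le_card_of_injOn (fun p => (p.1.1, p.2.1))
      · intro p hp
        simp only [mem_coe, mem_filter] at hp
        have := hmem p hp.1
        simp only [mem_coe, mem_product]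
        exact ⟨this.1.1, this.2.1.1⟩
      · intro p hp q hq h
        simp only [mem_coe, mem_filter] at hp hq
        obtain ⟨⟨hp1, hp2⟩, ⟨hp3, hp4⟩, hpe⟩ := hmem p hp.1
        obtain ⟨⟨hq1, hq2⟩, ⟨hq3, hq4⟩, hqe⟩ := hmem q hq.1
        simp only [Prod.mk.injEq] at h
        obtain ⟨e1, e3⟩ := h
        -- b*(p.1.2 - p.2.2) = a*(p.2.1 - p.1.1) = a*(q.2.1 - q.1.1) = b*(q.1.2 - q.2.2)
        have key : p.1.2 + q.2.2 = q.1.2 + p.2.2 := by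
          have hb2 : b * (p.1.2 + q.2.2) = b * (q.1.2 + p.2.2) := by
            have t1 : b * p.1.2 - b * p.2.2 = a * p.2.1 - a * p.1.1 := by linarith
            have t2 : b * q.1.2 - b * q.2.2 = a * q.2.1 - a * q.1.1 := by linarith
            rw [e1, e3] at t1
            ring_nf
            ring_nf at t1 t2
            linarith
          exact mul_left_cancel₀ hb hb2
        rcases hX p.1.2 hp2 q.2.2 hq4 q.1.2 hq2 p.2.2 hp4 key with ⟨u1, u2⟩ | ⟨u1, u2⟩
        · exact Prod.ext (Prod.ext e1 u1) (Prod.ext e3 u2.symm)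
        · exfalso
          have : a * p.2.1 - a * p.1.1 = 0 := by
            have : b * p.1.2 - b * p.2.2 = a * p.2.1 - a * p.1.1 := by linarith
            rw [u1] at this
            linarith
          have : p.2.1 = p.1.1 := by
            have := sub_eq_zero.mp (by linarith [this] : a * p.2.1 - a * p.1.1 = 0)
            exact mul_left_cancel₀ ha this
          exact hp.2 this.symm
    simpa [Finset.card_product, sq] using this
  omega

lemma cs_bound {α : Type*} [DecidableEq α] (Y Z : Finset α) (f g : α → ℤ) :
    2 * ((Y ×ˢ Z).filter fun p : α × α => f p.1 = g p.2).card ≤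
      ((Y ×ˢ Y).filter fun p : α × α => f p.1 = f p.2).card +
      ((Z ×ˢ Z).filter fun p : α × α => g p.1 = g p.2).card := by
  classical
  set T := Y.image f ∪ Z.image g with hT
  have hN : ((Y ×ˢ Z).filter fun p : α × α => f p.1 = g p.2).card
      = ∑ t ∈ T, (Y.filter fun x => f x = t).card * (Z.filter fun x => g x = t).card := by
    rw [Finset.card_eq_sum_card_fiberwise (f := fun p : α × α => f p.1) (t := T)
      (fun p hp => by
        simp only [mem_coe, mem_filter, mem_product] at hp
        exact Finset.mem_union_left _ (Finset.mem_image_of_mem f hp.1.1))]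
    refine Finset.sum_congr rfl fun t _ => ?_
    rw [← Finset.card_product]
    congr 1
    ext p
    simp only [mem_filter, mem_product]
    constructor
    · rintro ⟨⟨⟨h1, h2⟩, h3⟩, h4⟩
      exact ⟨⟨h1, h4⟩, h2, h3 ▸ h4⟩
    · rintro ⟨⟨h1, h4⟩, h2, h5⟩
      exact ⟨⟨⟨h1, h2⟩, h4.trans h5.symm⟩, h4⟩
  have hEf : ((Y ×ˢ Y).filter fun p : α × α => f p.1 = f p.2).card
      = ∑ t ∈ T, (Y.filter fun x => f x = t).card * (Y.filter fun x => f x = t).card := by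
    rw [Finset.card_eq_sum_card_fiberwise (f := fun p : α × α => f p.1) (t := T)
      (fun p hp => by
        simp only [mem_coe, mem_filter, mem_product] at hp
        exact Finset.mem_union_left _ (Finset.mem_image_of_mem f hp.1.1))]
    refine Finset.sum_congr rfl fun t _ => ?_
    rw [← Finset.card_product]
    congr 1
    ext p
    simp only [mem_filter, mem_product]
    constructor
    · rintro ⟨⟨⟨h1, h2⟩, h3⟩, h4⟩
      exact ⟨⟨h1, h4⟩, h2, h3 ▸ h4⟩
    · rintro ⟨⟨h1, h4⟩, h2, h5⟩
      exact ⟨⟨⟨h1, h2⟩, h4.trans h5.symm⟩, h4⟩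
  have hEg : ((Z ×ˢ Z).filter fun p : α × α => g p.1 = g p.2).card
      = ∑ t ∈ T, (Z.filter fun x => g x = t).card * (Z.filter fun x => g x = t).card := by
    rw [Finset.card_eq_sum_card_fiberwise (f := fun p : α × α => g p.1) (t := T)
      (fun p hp => by
        simp only [mem_coe, mem_filter, mem_product] at hp
        exact Finset.mem_union_right _ (Finset.mem_image_of_mem g hp.1.1))]
    refine Finset.sum_congr rfl fun t _ => ?_
    rw [← Finset.card_product]
    congr 1
    ext p
    simp only [mem_filter, mem_product]
    constructor
    · rintro ⟨⟨⟨h1, h2⟩, h3⟩, h4⟩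
      exact ⟨⟨h1, h4⟩, h2, h3 ▸ h4⟩
    · rintro ⟨⟨h1, h4⟩, h2, h5⟩
      exact ⟨⟨⟨h1, h2⟩, h4.trans h5.symm⟩, h4⟩
  rw [hN, hEf, hEg, Finset.mul_sum, ← Finset.sum_add_distrib]
  refine Finset.sum_le_sum fun t _ => ?_
  nlinarith [sq_nonneg ((Y.filter fun x => f x = t).card - (Z.filter fun x => g x = t).card : ℤ)]

lemma card_reassoc (X : Finset ℤ) (Q : ℤ → ℤ → ℤ → ℤ → Prop)
    [inst : ∀ a b c d, Decidable (Q a b c d)] :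
    ((X ×ˢ X ×ˢ X ×ˢ X).filter fun p : ℤ × ℤ × ℤ × ℤ => Q p.1 p.2.1 p.2.2.1 p.2.2.2).card =
    (((X ×ˢ X) ×ˢ (X ×ˢ X)).filter fun p : (ℤ × ℤ) × ℤ × ℤ => Q p.1.1 p.1.2 p.2.1 p.2.2).card := by
  classical
  apply Finset.card_bij (fun p _ => ((p.1, p.2.1), (p.2.2.1, p.2.2.2)))
  · intro p hp
    simp only [mem_filter, mem_product] at hp ⊢
    tauto
  · intro p hp q hq h
    simp only [Prod.mk.injEq] at h
    obtain ⟨⟨e1, e2⟩, e3, e4⟩ := h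
    exact Prod.ext e1 (Prod.ext e2 (Prod.ext e3 e4))
  · intro q hq
    simp only [mem_filter, mem_product] at hq
    exact ⟨(q.1.1, q.1.2, q.2.1, q.2.2), by
      simp only [mem_filter, mem_product]; tauto, rfl⟩

theorem sidon_linear_solutions_bound (a₁ a₂ a₃ a₄ : ℤ)
    (h₁ : a₁ ≠ 0) (h₂ : a₂ ≠ 0) (h₃ : a₃ ≠ 0) (h₄ : a₄ ≠ 0) :
    ∃ C : ℝ, 0 < C ∧ ∀ (n : ℕ) (X : Finset ℤ), X ⊆ Finset.Icc 1 (n : ℤ) → IsSidon X →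
      (((X ×ˢ X ×ˢ X ×ˢ X).filter
          (fun p : ℤ × ℤ × ℤ × ℤ =>
            a₁ * p.1 + a₂ * p.2.1 + a₃ * p.2.2.1 + a₄ * p.2.2.2 = 0)).card : ℝ) ≤ C * n := by
  classical
  refine ⟨6, by norm_num, fun n X hXn hX => ?_⟩
  set f : ℤ × ℤ → ℤ := fun q => a₁ * q.1 + a₂ * q.2 with hf
  set g : ℤ × ℤ → ℤ := fun q => -a₃ * q.1 + -a₄ * q.2 with hg
  have hN : ((X ×ˢ X ×ˢ X ×ˢ X).filter
          (fun p : ℤ × ℤ × ℤ × ℤ =>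
            a₁ * p.1 + a₂ * p.2.1 + a₃ * p.2.2.1 + a₄ * p.2.2.2 = 0)).card
      = (((X ×ˢ X) ×ˢ (X ×ˢ X)).filter fun p : (ℤ × ℤ) × ℤ × ℤ => f p.1 = g p.2).card := by
    rw [card_reassoc X (fun x₁ x₂ x₃ x₄ => a₁ * x₁ + a₂ * x₂ + a₃ * x₃ + a₄ * x₄ = 0)]
    apply Finset.card_nbij id (fun p hp => by
        simp only [mem_coe, mem_filter, id] at hp ⊢
        refine ⟨hp.1, ?_⟩
        simp only [hf, hg]
        linarith [hp.2])
      (Set.injOn_id _)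
    intro p hp
    simp only [Set.mem_image, mem_coe, mem_filter] at hp ⊢
    refine ⟨p, ⟨hp.1, ?_⟩, rfl⟩
    have := hp.2
    simp only [hf, hg] at this
    linarith
  have hCS := cs_bound (X ×ˢ X) (X ×ˢ X) f g
  have hEf := energy_bound a₁ a₂ h₁ h₂ X hX
  have hEg := energy_bound (-a₃) (-a₄) (neg_ne_zero.mpr h₃) (neg_ne_zero.mpr h₄) X hX
  have hEf' : (((X ×ˢ X) ×ˢ (X ×ˢ X)).filter fun p : (ℤ×ℤ)×ℤ×ℤ => f p.1 = f p.2).card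
      ≤ 2 * X.card ^ 2 := hEf
  have hEg' : (((X ×ˢ X) ×ˢ (X ×ˢ X)).filter fun p : (ℤ×ℤ)×ℤ×ℤ => g p.1 = g p.2).card
      ≤ 2 * X.card ^ 2 := hEg
  have hsq := sidon_card_sq n X hXn hX
  have key : ((X ×ˢ X ×ˢ X ×ˢ X).filter
          (fun p : ℤ × ℤ × ℤ × ℤ =>
            a₁ * p.1 + a₂ * p.2.1 + a₃ * p.2.2.1 + a₄ * p.2.2.2 = 0)).card ≤ 6 * n := by
    omega
  calc (((X ×ˢ X ×ˢ X ×ˢ X).filter _).card : ℝ) ≤ ((6 * n : ℕ) : ℝ) := by exact_mod_cast key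
    _ = 6 * n := by push_cast; ring
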